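/- Let K be an irreducible, aperiodic, substochastic kernel on countable S with spectral radius ρ. If for some x ∈ S, K^n(x,y)/K^n(x,S) → π_x(y) for all y where π_x is a probability measure, then π_x is ρ-invariant: ∑_z π_x(z) K(z,y) = ρ π_x(y) for all y ∈ S. -/

import Mathlib

open Filter Topology

private lemma aux_inv_nat : Tendsto (fun n : ℕ => ((n : ℝ))⁻¹) atTop (𝓝 0) :=
  tendsto_inv_atTop_zero.comp tendsto_natCast_atTop_atTop

private lemma aux_rpow_tendsto {c : ℝ} (hc : 0 < c) {e : ℕ → ℝ} {L : ℝ}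
    (he : Tendsto e atTop (𝓝 L)) :
    Tendsto (fun n : ℕ => c ^ e n) atTop (𝓝 (c ^ L)) :=
  ((Real.continuousAt_const_rpow hc.ne').tendsto).comp he

private lemma aux_rpow_const_inv {c : ℝ} (hc : 0 < c) :
    Tendsto (fun n : ℕ => c ^ ((n : ℝ)⁻¹)) atTop (𝓝 1) := by
  simpa [Real.rpow_zero] using aux_rpow_tendsto hc aux_inv_nat

private lemma aux_phi {m n₀ : ℕ} (hm : 0 < m) :
    Tendsto (fun k : ℕ => n₀ + k * m) atTop atTop := by
  apply tendsto_atTop_mono (f := fun k : ℕ => k) _ tendsto_id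
  intro k
  show k ≤ n₀ + k * m
  have : k ≤ k * m := Nat.le_mul_of_pos_right k hm
  omega

private lemma aux_exp_lim (n₀ m : ℕ) (hm : 0 < m) :
    Tendsto (fun k : ℕ => (k : ℝ) * (((n₀ + k * m : ℕ) : ℝ))⁻¹) atTop (𝓝 ((m : ℝ)⁻¹)) := by
  have hm' : (0 : ℝ) < m := by exact_mod_cast hm
  have ha : Tendsto (fun k : ℕ => (n₀ : ℝ) / (k : ℝ)) atTop (𝓝 0) :=
    Tendsto.div_atTop tendsto_const_nhds (tendsto_natCast_atTop_atTop (R := ℝ))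
  have h1 : Tendsto (fun k : ℕ => (n₀ : ℝ) / k + m) atTop (𝓝 (0 + m)) :=
    ha.add tendsto_const_nhds
  have h2 : Tendsto (fun k : ℕ => ((n₀ : ℝ) / k + m)⁻¹) atTop (𝓝 ((0 + m)⁻¹)) :=
    h1.inv₀ (by simpa using hm'.ne')
  rw [show ((0:ℝ) + m)⁻¹ = (m:ℝ)⁻¹ by rw [zero_add]] at h2
  refine h2.congr' ?_
  filter_upwards [eventually_ge_atTop 1] with k hk
  have hk0 : (k : ℝ) ≠ 0 := by
    have : (0:ℕ) < k := hk
    exact_mod_cast this.ne'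
  have hcast : (((n₀ + k * m : ℕ)) : ℝ) = (n₀ : ℝ) + (k : ℝ) * (m : ℝ) := by push_cast; ring
  rw [hcast]
  have hstep : (n₀ : ℝ) / k + m = ((n₀ : ℝ) + (k:ℝ) * m) / k := by field_simp
  rw [hstep, inv_div, div_eq_mul_inv]

private lemma aux_geom_root_le {u : ℕ → ℝ} {ρ : ℝ}
    (hu : Tendsto (fun n : ℕ => u n ^ ((n : ℝ)⁻¹)) atTop (𝓝 ρ))
    {C θ : ℝ} (hC : 0 < C) (hθ : 0 < θ) {m n₀ : ℕ} (hm : 0 < m)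
    (h : ∀ k : ℕ, C * θ ^ k ≤ u (n₀ + k * m)) :
    θ ^ ((m : ℝ)⁻¹) ≤ ρ := by
  have hφ : Tendsto (fun k : ℕ => n₀ + k * m) atTop atTop := aux_phi hm
  have hsub : Tendsto (fun k : ℕ => u (n₀ + k * m) ^ (((n₀ + k * m : ℕ) : ℝ))⁻¹)
      atTop (𝓝 ρ) := hu.comp hφ
  have e1 : Tendsto (fun k : ℕ => C ^ ((((n₀ + k * m : ℕ)) : ℝ))⁻¹) atTop (𝓝 1) := by
    have hexp : Tendsto (fun k : ℕ => (((n₀ + k * m : ℕ) : ℝ))⁻¹) atTop (𝓝 0) :=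
      aux_inv_nat.comp hφ
    simpa [Real.rpow_zero] using aux_rpow_tendsto hC hexp
  have e2 : Tendsto (fun k : ℕ => θ ^ ((k : ℝ) * (((n₀ + k * m : ℕ) : ℝ))⁻¹))
      atTop (𝓝 (θ ^ ((m : ℝ)⁻¹))) := aux_rpow_tendsto hθ (aux_exp_lim n₀ m hm)
  have hlow : Tendsto (fun k : ℕ => (C * θ ^ k) ^ ((((n₀ + k * m : ℕ)) : ℝ))⁻¹)
      atTop (𝓝 (1 * θ ^ ((m : ℝ)⁻¹))) := by
    refine (e1.mul e2).congr fun k => ?_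
    rw [Real.mul_rpow hC.le (by positivity), ← Real.rpow_natCast θ k,
      ← Real.rpow_mul hθ.le]
  have := le_of_tendsto_of_tendsto' hlow hsub (fun k =>
    Real.rpow_le_rpow (by positivity) (h k) (by positivity))
  simpa using this

private lemma aux_geom_root_ge {u : ℕ → ℝ} {ρ : ℝ}
    (hu : Tendsto (fun n : ℕ => u n ^ ((n : ℝ)⁻¹)) atTop (𝓝 ρ))
    (hnn : ∀ n, 0 ≤ u n)
    {C θ : ℝ} (hC : 0 < C) (hθ : 0 < θ) {n₀ : ℕ}
    (h : ∀ k : ℕ, u (n₀ + k) ≤ C * θ ^ k) :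
    ρ ≤ θ := by
  have hφ : Tendsto (fun k : ℕ => n₀ + k * 1) atTop atTop := aux_phi one_pos
  have hsub : Tendsto (fun k : ℕ => u (n₀ + k * 1) ^ (((n₀ + k * 1 : ℕ) : ℝ))⁻¹)
      atTop (𝓝 ρ) := hu.comp hφ
  have e1 : Tendsto (fun k : ℕ => C ^ ((((n₀ + k * 1 : ℕ)) : ℝ))⁻¹) atTop (𝓝 1) := by
    have hexp : Tendsto (fun k : ℕ => (((n₀ + k * 1 : ℕ) : ℝ))⁻¹) atTop (𝓝 0) :=
      aux_inv_nat.comp hφ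
    simpa [Real.rpow_zero] using aux_rpow_tendsto hC hexp
  have e2 : Tendsto (fun k : ℕ => θ ^ ((k : ℝ) * (((n₀ + k * 1 : ℕ) : ℝ))⁻¹))
      atTop (𝓝 θ) := by
    have := aux_rpow_tendsto hθ (aux_exp_lim n₀ 1 one_pos)
    simpa [Real.rpow_one] using this
  have hupper : Tendsto (fun k : ℕ => (C * θ ^ k) ^ ((((n₀ + k * 1 : ℕ)) : ℝ))⁻¹)
      atTop (𝓝 (1 * θ)) := by
    refine (e1.mul e2).congr fun k => ?_
    rw [Real.mul_rpow hC.le (by positivity), ← Real.rpow_natCast θ k,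
      ← Real.rpow_mul hθ.le]
  have := le_of_tendsto_of_tendsto' hsub hupper (fun k =>
    Real.rpow_le_rpow (hnn _) (by simpa [mul_one] using h k) (by positivity))
  simpa using this

private lemma aux_freq_le {u : ℕ → ℝ} {ρ : ℝ}
    (hu : Tendsto (fun n : ℕ => u n ^ ((n : ℝ)⁻¹)) atTop (𝓝 ρ))
    (hpos : ∀ᶠ n in atTop, 0 < u n)
    {θ : ℝ} (hθ : ρ < θ) (hθ0 : 0 < θ) {m : ℕ} (hm : 0 < m) :
    ∃ᶠ n in atTop, u (n + m) ≤ θ ^ m * u n := by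
  by_contra hcon
  rw [not_frequently] at hcon
  obtain ⟨N, hN⟩ := eventually_atTop.mp (hcon.and hpos)
  have key : ∀ k : ℕ, u N * (θ ^ m) ^ k ≤ u (N + k * m) := by
    intro k
    induction k with
    | zero => simp
    | succ k ih =>
      have h1 : θ ^ m * u (N + k * m) < u ((N + k * m) + m) := by
        have := (hN (N + k * m) (Nat.le_add_right _ _)).1
        exact not_le.mp this
      have h2 : u N * (θ ^ m) ^ (k + 1) = θ ^ m * (u N * (θ ^ m) ^ k) := by ring
      have h3 : θ ^ m * (u N * (θ ^ m) ^ k) ≤ θ ^ m * u (N + k * m) :=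
        mul_le_mul_of_nonneg_left ih (by positivity)
      have h4 : N + (k + 1) * m = (N + k * m) + m := by ring
      rw [h2, h4]
      exact h3.trans h1.le
  have hNpos : 0 < u N := (hN N le_rfl).2
  have hfin := aux_geom_root_le hu hNpos (by positivity : (0:ℝ) < θ ^ m) hm key
  rw [← Real.rpow_natCast θ m, ← Real.rpow_mul hθ0.le,
    mul_inv_cancel₀ (by exact_mod_cast hm.ne' : (m : ℝ) ≠ 0), Real.rpow_one] at hfin
  exact absurd hfin (not_le.mpr hθ)

private lemma aux_freq_ge {u : ℕ → ℝ} {ρ : ℝ}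
    (hu : Tendsto (fun n : ℕ => u n ^ ((n : ℝ)⁻¹)) atTop (𝓝 ρ))
    (hnn : ∀ n, 0 ≤ u n)
    (hpos : ∀ᶠ n in atTop, 0 < u n)
    {θ : ℝ} (hθ0 : 0 < θ) (hθ : θ < ρ) :
    ∃ᶠ n in atTop, θ * u n ≤ u (n + 1) := by
  by_contra hcon
  rw [not_frequently] at hcon
  obtain ⟨N, hN⟩ := eventually_atTop.mp (hcon.and hpos)
  have key : ∀ k : ℕ, u (N + k) ≤ u N * θ ^ k := by
    intro k
    induction k with
    | zero => simp
    | succ k ih =>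
      have h1 : u ((N + k) + 1) < θ * u (N + k) := not_le.mp (hN (N + k) (Nat.le_add_right _ _)).1
      have h2 : θ * u (N + k) ≤ θ * (u N * θ ^ k) := mul_le_mul_of_nonneg_left ih hθ0.le
      have h4 : N + (k + 1) = (N + k) + 1 := by ring
      rw [h4]
      calc u ((N + k) + 1) ≤ θ * (u N * θ ^ k) := h1.le.trans h2
        _ = u N * θ ^ (k + 1) := by ring
  have hNpos : 0 < u N := (hN N le_rfl).2
  exact absurd (aux_geom_root_ge hu hnn hNpos hθ0 key) (not_le.mpr hθ)

private lemma aux_scheffe {ι : Type*} {b : ℕ → ι → ℝ} {p : ι → ℝ}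
    (hpnn : ∀ z, 0 ≤ p z) (hps : Summable p) (hp1 : ∑' z, p z = 1)
    (hb : ∀ᶠ n in atTop, (∀ z, 0 ≤ b n z) ∧ Summable (b n) ∧ ∑' z, b n z = 1)
    (hconv : ∀ z, Tendsto (fun n => b n z) atTop (𝓝 (p z))) :
    Tendsto (fun n => ∑' z, |b n z - p z|) atTop (𝓝 0) := by
  have hmin : Tendsto (fun n => ∑' z, min (b n z) (p z)) atTop (𝓝 1) := by
    have h := tendsto_tsum_of_dominated_convergence (𝓕 := atTop)
      (f := fun n z => min (b n z) (p z)) (g := p) (bound := p) hps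
      (fun z => by simpa [min_self] using ((hconv z).min (tendsto_const_nhds (x := p z))))
      (by
        filter_upwards [hb] with n hn z
        rw [Real.norm_eq_abs, abs_of_nonneg (le_min (hn.1 z) (hpnn z))]
        exact min_le_right _ _)
    rwa [hp1] at h
  have heq : ∀ᶠ n in atTop,
      ∑' z, |b n z - p z| = 2 - 2 * ∑' z, min (b n z) (p z) := by
    filter_upwards [hb] with n hn
    obtain ⟨hbnn, hbs, hb1⟩ := hn
    have hminS : Summable (fun z => min (b n z) (p z)) :=
      Summable.of_nonneg_of_le (fun z => le_min (hbnn z) (hpnn z))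
        (fun z => min_le_right _ _) hps
    have hid : ∀ z, |b n z - p z| = (b n z + p z) - 2 * min (b n z) (p z) := by
      intro z
      rcases le_total (b n z) (p z) with h | h
      · rw [abs_of_nonpos (by linarith), min_eq_left h]; ring
      · rw [abs_of_nonneg (by linarith), min_eq_right h]; ring
    calc ∑' z, |b n z - p z|
        = ∑' z, ((b n z + p z) - 2 * min (b n z) (p z)) := tsum_congr hid
      _ = (∑' z, (b n z + p z)) - ∑' z, 2 * min (b n z) (p z) :=
          Summable.tsum_sub (hbs.add hps) (hminS.mul_left 2)
      _ = ((∑' z, b n z) + ∑' z, p z) - 2 * ∑' z, min (b n z) (p z) := by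
          rw [Summable.tsum_add hbs hps, tsum_mul_left]
      _ = 2 - 2 * ∑' z, min (b n z) (p z) := by rw [hb1, hp1]; ring
  have hfin : Tendsto (fun n => 2 - 2 * ∑' z, min (b n z) (p z)) atTop (𝓝 (2 - 2 * 1)) :=
    tendsto_const_nhds.sub (hmin.const_mul 2)
  have := Filter.Tendsto.congr' (Filter.EventuallyEq.symm heq) hfin
  simpa using this

open Filter Topology

open scoped Classical in
/-- Matrix powers of a kernel `K` on a countable state space. -/
noncomputable def Kpow {S : Type*} (K : S → S → ℝ) : ℕ → S → S → ℝ
  | 0 => fun x y => if x = y then 1 else 0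
  | n + 1 => fun x y => ∑' z, Kpow K n x z * K z y

/-- A Yaglom limit of an irreducible, aperiodic, substochastic kernel is a
`ρ`-invariant quasi-stationary distribution. -/
theorem yaglom_limit_rho_invariant {S : Type*} [Countable S] (K : S → S → ℝ)
    (hnn : ∀ x y, 0 ≤ K x y)
    (hsub : ∀ x, ∑' y, K x y ≤ 1)
    (hirr : ∀ x y : S, ∃ n, 0 < Kpow K n x y)
    (haper : ∀ x : S, ∀ m : ℕ, (∀ n, 0 < n → 0 < Kpow K n x x → m ∣ n) → m = 1)
    (ρ : ℝ) (hρpos : 0 < ρ) (hρle : ρ ≤ 1)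
    (hρ : ∀ x y : S,
      Tendsto (fun n : ℕ => (Kpow K n x y) ^ ((n : ℝ)⁻¹)) atTop (𝓝 ρ))
    (x : S) (π : S → ℝ) (hπnn : ∀ y, 0 ≤ π y) (hπ1 : ∑' y, π y = 1)
    (hyag : ∀ y : S,
      Tendsto (fun n : ℕ => Kpow K n x y / ∑' z, Kpow K n x z) atTop (𝓝 (π y))) :
    ∀ y : S, ∑' z, π z * K z y = ρ * π y := by
  have hsucc : ∀ (n : ℕ) (u v : S), Kpow K (n + 1) u v = ∑' z, Kpow K n u z * K z v :=
    fun n u v => by rw [Kpow]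
  -- nonnegativity of matrix powers
  have hKnn : ∀ (n : ℕ) (u v : S), 0 ≤ Kpow K n u v := by
    intro n
    induction n with
    | zero => intro u v; simp only [Kpow]; split <;> norm_num
    | succ n ih =>
      intro u v
      rw [hsucc]
      exact tsum_nonneg fun z => mul_nonneg (ih u z) (hnn z v)
  -- π is summable and has a positive value
  have hπs : Summable π := by
    by_contra h
    rw [tsum_eq_zero_of_not_summable h] at hπ1
    norm_num at hπ1
  obtain ⟨y₀, hy₀pos⟩ : ∃ y, 0 < π y := by
    by_contra h
    push_neg at h
    have hz : ∀ y, π y = 0 := fun y => le_antisymm (h y) (hπnn y)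
    rw [tsum_congr hz, tsum_zero] at hπ1
    norm_num at hπ1
  -- nonnegativity of the total masses
  have hsnn : ∀ n : ℕ, 0 ≤ ∑' z, Kpow K n x z := fun n => tsum_nonneg fun z => hKnn n x z
  -- eventually the rows K^n(x, ·) are summable with positive total mass
  have hsev : ∀ᶠ n in atTop, Summable (fun z => Kpow K n x z) ∧ 0 < ∑' z, Kpow K n x z := by
    have h := (hyag y₀).eventually (lt_mem_nhds (show π y₀ / 2 < π y₀ by linarith))
    filter_upwards [h] with n hn
    have hne : (∑' z, Kpow K n x z) ≠ 0 := by
      intro h0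
      rw [h0, div_zero] at hn
      linarith
    exact ⟨by by_contra hc; exact hne (tsum_eq_zero_of_not_summable hc),
      lt_of_le_of_ne (hsnn n) (Ne.symm hne)⟩
  have hspos : ∀ᶠ n in atTop, 0 < ∑' z, Kpow K n x z := hsev.mono fun n h => h.2
  -- eventual positivity of every entry
  have hapos : ∀ y : S, ∀ᶠ n in atTop, 0 < Kpow K n x y := by
    intro y
    have h := (hρ x y).eventually (lt_mem_nhds (show ρ / 2 < ρ by linarith))
    filter_upwards [h, eventually_ge_atTop 1] with n hn hn1
    by_contra hc
    push_neg at hc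
    have h0 : Kpow K n x y = 0 := le_antisymm hc (hKnn n x y)
    rw [h0, Real.zero_rpow (inv_ne_zero (Nat.cast_ne_zero.mpr (by omega)))] at hn
    linarith
  -- eventual summability of each one-step decomposition plus step bound
  have hstep : ∀ y : S, ∀ᶠ n in atTop,
      Summable (fun w => Kpow K n x w * K w y) ∧
        ∀ z, Kpow K n x z * K z y ≤ Kpow K (n + 1) x y := by
    intro y
    have h := (tendsto_add_atTop_nat 1).eventually (hapos y)
    filter_upwards [h] with n hn
    have hsum : Summable (fun w => Kpow K n x w * K w y) := by
      by_contra hc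
      rw [hsucc n x y, tsum_eq_zero_of_not_summable hc] at hn
      exact lt_irrefl 0 hn
    refine ⟨hsum, fun z => ?_⟩
    rw [hsucc n x y]
    exact Summable.le_tsum hsum z fun w _ => mul_nonneg (hKnn n x w) (hnn w y)
  -- the total mass has n-th root converging to ρ
  have hsroot : Tendsto (fun n : ℕ => (∑' z, Kpow K n x z) ^ ((n : ℝ)⁻¹)) atTop (𝓝 ρ) := by
    have hy2 := (hyag y₀).eventually (lt_mem_nhds (show π y₀ / 2 < π y₀ by linarith))
    have hlo : ∀ᶠ n in atTop,
        Kpow K n x y₀ ^ ((n : ℝ)⁻¹) ≤ (∑' z, Kpow K n x z) ^ ((n : ℝ)⁻¹) := by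
      filter_upwards [hsev] with n hn
      exact Real.rpow_le_rpow (hKnn n x y₀) (Summable.le_tsum hn.1 y₀ fun w _ => hKnn n x w)
        (by positivity)
    have hhi : ∀ᶠ n in atTop, (∑' z, Kpow K n x z) ^ ((n : ℝ)⁻¹) ≤
        ((2 / π y₀) ^ ((n : ℝ)⁻¹)) * (Kpow K n x y₀ ^ ((n : ℝ)⁻¹)) := by
      filter_upwards [hsev, hy2] with n hn h2
      have hs0 := hn.2
      have h3 : π y₀ / 2 * (∑' z, Kpow K n x z) < Kpow K n x y₀ := (lt_div_iff₀ hs0).mp h2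
      have hkey : (∑' z, Kpow K n x z) ≤ (2 / π y₀) * Kpow K n x y₀ := by
        have hc : (0:ℝ) < 2 / π y₀ := by positivity
        calc (∑' z, Kpow K n x z) = (2 / π y₀) * (π y₀ / 2 * (∑' z, Kpow K n x z)) := by
              field_simp
          _ ≤ (2 / π y₀) * Kpow K n x y₀ := mul_le_mul_of_nonneg_left h3.le hc.le
      calc (∑' z, Kpow K n x z) ^ ((n : ℝ)⁻¹)
          ≤ ((2 / π y₀) * Kpow K n x y₀) ^ ((n : ℝ)⁻¹) :=
            Real.rpow_le_rpow (hsnn n) hkey (by positivity)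
        _ = _ := Real.mul_rpow (by positivity) (hKnn n x y₀)
    have hupper : Tendsto (fun n : ℕ =>
        ((2 / π y₀) ^ ((n : ℝ)⁻¹)) * (Kpow K n x y₀ ^ ((n : ℝ)⁻¹))) atTop (𝓝 ρ) := by
      have := (aux_rpow_const_inv (show (0:ℝ) < 2 / π y₀ by positivity)).mul (hρ x y₀)
      simpa using this
    exact tendsto_of_tendsto_of_tendsto_of_le_of_le' (hρ x y₀) hupper hlo hhi
  -- π has full support
  have hfull : ∀ y : S, 0 < π y := by
    have key : ∀ (m : ℕ) (y : S), 0 < Kpow K m y₀ y →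
        ∃ δ : ℝ, 0 < δ ∧ ∀ᶠ n in atTop, δ * Kpow K n x y₀ ≤ Kpow K (n + m) x y := by
      intro m
      induction m with
      | zero =>
        intro y hy
        have hyy : y₀ = y := by
          by_contra hne
          rw [show Kpow K 0 y₀ y = 0 by simp [Kpow, hne]] at hy
          exact lt_irrefl 0 hy
        subst hyy
        exact ⟨1, one_pos, Filter.Eventually.of_forall fun n => by simp⟩
      | succ m ih =>
        intro y hy
        rw [hsucc m y₀ y] at hy
        have hex : ∃ w, 0 < Kpow K m y₀ w * K w y := by
          by_contra hc
          push_neg at hc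
          have hz : ∀ w, Kpow K m y₀ w * K w y = 0 := fun w =>
            le_antisymm (hc w) (mul_nonneg (hKnn m y₀ w) (hnn w y))
          rw [tsum_congr hz, tsum_zero] at hy
          exact lt_irrefl 0 hy
        obtain ⟨w, hw⟩ := hex
        have hw1 : 0 < Kpow K m y₀ w := by
          rcases mul_pos_iff.mp hw with ⟨h1, _⟩ | ⟨h1, _⟩
          · exact h1
          · linarith [hKnn m y₀ w]
        have hw2 : 0 < K w y := by
          rcases mul_pos_iff.mp hw with ⟨_, h2⟩ | ⟨h2, _⟩
          · exact h2
          · linarith [hKnn m y₀ w]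
        obtain ⟨δ, hδ, hev⟩ := ih w hw1
        refine ⟨δ * K w y, mul_pos hδ hw2, ?_⟩
        filter_upwards [hev, (tendsto_add_atTop_nat m).eventually (hstep y)] with n h1 h2
        have h3 : Kpow K (n + m) x w * K w y ≤ Kpow K (n + m + 1) x y := h2.2 w
        have h4 : δ * Kpow K n x y₀ * K w y ≤ Kpow K (n + m) x w * K w y :=
          mul_le_mul_of_nonneg_right h1 (hnn w y)
        calc δ * K w y * Kpow K n x y₀ = δ * Kpow K n x y₀ * K w y := by ring
          _ ≤ Kpow K (n + (m + 1)) x y := h4.trans h3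
    intro y
    obtain ⟨m, hm⟩ := hirr y₀ y
    obtain ⟨δ, hδ, hchain⟩ := key m y hm
    rcases Nat.eq_zero_or_pos m with hm0 | hmpos
    · subst hm0
      have h1 : Tendsto (fun n : ℕ => δ * (Kpow K n x y₀ / ∑' z, Kpow K n x z)) atTop
          (𝓝 (δ * π y₀)) := (hyag y₀).const_mul δ
      have hle : ∀ᶠ n in atTop, δ * (Kpow K n x y₀ / ∑' z, Kpow K n x z) ≤
          Kpow K n x y / ∑' z, Kpow K n x z := by
        filter_upwards [hchain, hsev] with n hc hs
        rw [mul_div_assoc']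
        exact (div_le_div_iff_of_pos_right hs.2).mpr hc
      have h2 := le_of_tendsto_of_tendsto h1 (hyag y) hle
      exact lt_of_lt_of_le (mul_pos hδ hy₀pos) h2
    · -- the case of a path of positive length
      have hfreq := aux_freq_le hsroot hspos (show ρ < ρ + 1 by linarith)
        (by linarith) hmpos
      have hP : (0:ℝ) < (ρ + 1) ^ m := pow_pos (by linarith) m
      set c : ℝ := δ * (π y₀ / 2) / (ρ + 1) ^ m with hcdef
      have hcpos : 0 < c := div_pos (mul_pos hδ (by linarith)) hP
      by_contra hcon
      push_neg at hcon
      have hshift : Tendsto (fun n : ℕ => Kpow K (n + m) x y / ∑' z, Kpow K (n + m) x z)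
          atTop (𝓝 (π y)) := (hyag y).comp (tendsto_add_atTop_nat m)
      have hπyc : π y < c := lt_of_le_of_lt hcon hcpos
      have hevlt : ∀ᶠ n in atTop,
          Kpow K (n + m) x y / ∑' z, Kpow K (n + m) x z < c :=
        hshift.eventually (gt_mem_nhds hπyc)
      have hy2 := (hyag y₀).eventually (lt_mem_nhds (show π y₀ / 2 < π y₀ by linarith))
      obtain ⟨n, hr, hs1, hs2, hch, hy₀n, hlt⟩ :=
        (hfreq.and_eventually (hsev.and
          (((tendsto_add_atTop_nat m).eventually hsev).and
            (hchain.and (hy2.and hevlt))))).exists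
      have hb : π y₀ / 2 * (∑' z, Kpow K n x z) < Kpow K n x y₀ := (lt_div_iff₀ hs1.2).mp hy₀n
      have h1 : c * ((ρ + 1) ^ m) = δ * (π y₀ / 2) := by
        rw [hcdef]; field_simp
      have h2 : c * (∑' z, Kpow K (n + m) x z) ≤ δ * (π y₀ / 2) * (∑' z, Kpow K n x z) := by
        calc c * (∑' z, Kpow K (n + m) x z)
            ≤ c * ((ρ + 1) ^ m * (∑' z, Kpow K n x z)) :=
              mul_le_mul_of_nonneg_left hr hcpos.le
          _ = δ * (π y₀ / 2) * (∑' z, Kpow K n x z) := by rw [← mul_assoc, h1]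
      have h3 : δ * (π y₀ / 2) * (∑' z, Kpow K n x z) < δ * Kpow K n x y₀ := by
        nlinarith
      have h5 : c < Kpow K (n + m) x y / ∑' z, Kpow K (n + m) x z :=
        (lt_div_iff₀ hs2.2).mpr (by linarith [hch])
      linarith
  -- every row of K is summable, hence bounded by 1
  have hKrow : ∀ z : S, Summable (fun y => K z y) := by
    intro z
    have hπz := hfull z
    have hfreq := aux_freq_le hsroot hspos (show ρ < ρ + 1 by linarith)
      (by linarith) one_pos
    apply summable_of_sum_le (c := (ρ + 1) * (2 / π z)) (fun y => hnn z y)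
    intro F
    have hzF : ∀ᶠ n in atTop, ∀ y ∈ F,
        Summable (fun w => Kpow K n x w * K w y) ∧
          ∀ w, Kpow K n x w * K w y ≤ Kpow K (n + 1) x y :=
      F.eventually_all.mpr fun y _ => hstep y
    have hy2 := (hyag z).eventually (lt_mem_nhds (show π z / 2 < π z by linarith))
    obtain ⟨n, hr, hFn, hsn1, hsn, hzn⟩ :=
      (hfreq.and_eventually (hzF.and
        (((tendsto_add_atTop_nat 1).eventually hsev).and (hsev.and hy2)))).exists
    rw [pow_one] at hr
    have hb : π z / 2 * (∑' w, Kpow K n x w) < Kpow K n x z := (lt_div_iff₀ hsn.2).mp hzn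
    have hzpos : 0 < Kpow K n x z :=
      lt_of_le_of_lt (mul_nonneg (by linarith : (0:ℝ) ≤ π z / 2) (hsnn n)) hb
    have h1 : ∑ y ∈ F, Kpow K n x z * K z y ≤ ∑ y ∈ F, Kpow K (n + 1) x y :=
      Finset.sum_le_sum fun y hy => (hFn y hy).2 z
    have h2 : ∑ y ∈ F, Kpow K (n + 1) x y ≤ ∑' w, Kpow K (n + 1) x w :=
      Summable.sum_le_tsum F (fun w _ => hKnn (n + 1) x w) hsn1.1
    have hMul : Kpow K n x z * ∑ y ∈ F, K z y ≤ (ρ + 1) * (∑' w, Kpow K n x w) := by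
      rw [Finset.mul_sum]
      exact h1.trans (h2.trans hr)
    have hs_le : (∑' w, Kpow K n x w) ≤ 2 / π z * Kpow K n x z := by
      have hc : (0:ℝ) < 2 / π z := by positivity
      calc (∑' w, Kpow K n x w) = (2 / π z) * (π z / 2 * (∑' w, Kpow K n x w)) := by
            field_simp
        _ ≤ 2 / π z * Kpow K n x z := mul_le_mul_of_nonneg_left hb.le hc.le
    have hfin : Kpow K n x z * ∑ y ∈ F, K z y ≤ Kpow K n x z * ((ρ + 1) * (2 / π z)) := by
      calc Kpow K n x z * ∑ y ∈ F, K z y ≤ (ρ + 1) * (∑' w, Kpow K n x w) := hMul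
        _ ≤ (ρ + 1) * (2 / π z * Kpow K n x z) :=
            mul_le_mul_of_nonneg_left hs_le (by linarith)
        _ = Kpow K n x z * ((ρ + 1) * (2 / π z)) := by ring
    exact (mul_le_mul_iff_right₀ hzpos).mp hfin
  have hKle : ∀ z y : S, K z y ≤ 1 := fun z y =>
    (Summable.le_tsum (hKrow z) y fun w _ => hnn z w).trans (hsub z)
  -- Scheffé: L¹ convergence of the conditioned distributions to π
  have hb : ∀ᶠ n in atTop,
      (∀ z, 0 ≤ Kpow K n x z / ∑' w, Kpow K n x w) ∧
        Summable (fun z => Kpow K n x z / ∑' w, Kpow K n x w) ∧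
          ∑' z, Kpow K n x z / ∑' w, Kpow K n x w = 1 := by
    filter_upwards [hsev] with n hn
    refine ⟨fun z => div_nonneg (hKnn n x z) (hsnn n), hn.1.div_const _, ?_⟩
    rw [tsum_div_const, div_self hn.2.ne']
  have hSch : Tendsto
      (fun n => ∑' z, |Kpow K n x z / ∑' w, Kpow K n x w - π z|) atTop (𝓝 0) :=
    aux_scheffe hπnn hπs hπ1 hb hyag
  -- final computation, for each fixed target state y
  intro y
  have hπy := hfull y
  have hμs : Summable (fun z => π z * K z y) :=
    Summable.of_nonneg_of_le (fun z => mul_nonneg (hπnn z) (hnn z y))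
      (fun z => mul_le_of_le_one_right (hπnn z) (hKle z y)) hπs
  set μ : ℝ := ∑' z, π z * K z y with hμdef
  have hμnn : 0 ≤ μ := tsum_nonneg fun z => mul_nonneg (hπnn z) (hnn z y)
  have hcdiff : ∀ᶠ n in atTop,
      |Kpow K (n + 1) x y / ∑' w, Kpow K n x w - μ| ≤
        ∑' z, |Kpow K n x z / ∑' w, Kpow K n x w - π z| := by
    filter_upwards [hsev, hstep y] with n hn hst
    have hbS : Summable (fun z => Kpow K n x z / ∑' w, Kpow K n x w) := hn.1.div_const _
    have hbKs : Summable (fun z => (Kpow K n x z / ∑' w, Kpow K n x w) * K z y) := by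
      refine (hst.1.div_const (∑' w, Kpow K n x w)).congr fun z => ?_
      rw [mul_div_right_comm]
    have hdiffS : Summable (fun z => Kpow K n x z / ∑' w, Kpow K n x w - π z) :=
      hbS.sub hπs
    have habsS : Summable (fun z => |Kpow K n x z / ∑' w, Kpow K n x w - π z|) :=
      hdiffS.abs
    have heq1 : Kpow K (n + 1) x y / ∑' w, Kpow K n x w =
        ∑' z, (Kpow K n x z / ∑' w, Kpow K n x w) * K z y := by
      rw [hsucc n x y, ← tsum_div_const]
      exact tsum_congr fun z => mul_div_right_comm _ _ _
    have heq2 : Kpow K (n + 1) x y / ∑' w, Kpow K n x w - μ =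
        ∑' z, (Kpow K n x z / ∑' w, Kpow K n x w - π z) * K z y := by
      rw [heq1, hμdef, ← Summable.tsum_sub hbKs hμs]
      exact tsum_congr fun z => (sub_mul _ _ _).symm
    have hbound : ∀ z, |(Kpow K n x z / ∑' w, Kpow K n x w - π z) * K z y| ≤
        |Kpow K n x z / ∑' w, Kpow K n x w - π z| := by
      intro z
      rw [abs_mul]
      refine mul_le_of_le_one_right (abs_nonneg _) ?_
      rw [abs_of_nonneg (hnn z y)]
      exact hKle z y
    have hadsS : Summable (fun z => |(Kpow K n x z / ∑' w, Kpow K n x w - π z) * K z y|) :=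
      Summable.of_nonneg_of_le (fun z => abs_nonneg _) hbound habsS
    rw [heq2]
    calc |∑' z, (Kpow K n x z / ∑' w, Kpow K n x w - π z) * K z y|
        ≤ ∑' z, |(Kpow K n x z / ∑' w, Kpow K n x w - π z) * K z y| := by
          have h := norm_tsum_le_tsum_norm
            (f := fun z => (Kpow K n x z / ∑' w, Kpow K n x w - π z) * K z y)
            (by simpa only [Real.norm_eq_abs] using hadsS)
          simpa only [Real.norm_eq_abs] using h
      _ ≤ ∑' z, |Kpow K n x z / ∑' w, Kpow K n x w - π z| :=
          Summable.tsum_le_tsum hbound hadsS habsS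
  have hcy : Tendsto (fun n => Kpow K (n + 1) x y / ∑' w, Kpow K n x w) atTop (𝓝 μ) := by
    have h0 : Tendsto (fun n => Kpow K (n + 1) x y / ∑' w, Kpow K n x w - μ)
        atTop (𝓝 0) :=
      squeeze_zero_norm' (by simpa [Real.norm_eq_abs] using hcdiff) hSch
    have := h0.add (tendsto_const_nhds (x := μ))
    simpa using this
  have hyag1 : Tendsto (fun n => Kpow K (n + 1) x y / ∑' w, Kpow K (n + 1) x w)
      atTop (𝓝 (π y)) := (hyag y).comp (tendsto_add_atTop_nat 1)
  have hratio : Tendsto (fun n => (∑' w, Kpow K (n + 1) x w) / ∑' w, Kpow K n x w)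
      atTop (𝓝 (μ / π y)) := by
    have hdiv := hcy.div hyag1 (ne_of_gt hπy)
    refine hdiv.congr' ?_
    filter_upwards [hsev, (tendsto_add_atTop_nat 1).eventually hsev,
      (tendsto_add_atTop_nat 1).eventually (hapos y)] with n h1 h2 h3
    have hA : Kpow K (n + 1) x y ≠ 0 := h3.ne'
    have hs : (∑' w, Kpow K n x w) ≠ 0 := h1.2.ne'
    have hs1 : (∑' w, Kpow K (n + 1) x w) ≠ 0 := h2.2.ne'
    rw [Pi.div_apply]
    field_simp
  have hlamle : μ / π y ≤ ρ := by
    by_contra hcon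
    push_neg at hcon
    set θ : ℝ := (ρ + μ / π y) / 2 with hθdef
    have hθ1 : ρ < θ := by rw [hθdef]; linarith
    have hθ2 : θ < μ / π y := by rw [hθdef]; linarith
    have hfreq := aux_freq_le hsroot hspos hθ1 (by linarith) one_pos
    have hev := hratio.eventually (lt_mem_nhds hθ2)
    obtain ⟨n, hr, hθlt, hsn⟩ := (hfreq.and_eventually (hev.and hsev)).exists
    rw [pow_one] at hr
    have : (∑' w, Kpow K (n + 1) x w) / (∑' w, Kpow K n x w) ≤ θ :=
      (div_le_iff₀ hsn.2).mpr hr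
    linarith
  have hlamge : ρ ≤ μ / π y := by
    by_contra hcon
    push_neg at hcon
    have hlamnn : 0 ≤ μ / π y := div_nonneg hμnn hπy.le
    set θ : ℝ := (μ / π y + ρ) / 2 with hθdef
    have hθpos : 0 < θ := by rw [hθdef]; linarith
    have hθ1 : μ / π y < θ := by rw [hθdef]; linarith
    have hθ2 : θ < ρ := by rw [hθdef]; linarith
    have hfreq := aux_freq_ge hsroot hsnn hspos hθpos hθ2
    have hev := hratio.eventually (gt_mem_nhds hθ1)
    obtain ⟨n, hr, hθlt, hsn⟩ := (hfreq.and_eventually (hev.and hsev)).exists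
    have : θ ≤ (∑' w, Kpow K (n + 1) x w) / (∑' w, Kpow K n x w) :=
      (le_div_iff₀ hsn.2).mpr (by linarith)
    linarith
  have hfinal : μ / π y = ρ := le_antisymm hlamle hlamge
  exact (div_eq_iff (ne_of_gt hπy)).mp hfinal
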